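/- (Theorem 2 of the paper, gradient formula: the Euclidean parametrization reduces the gradient-vanishing power from δ² to δ.) Let n ≥ 1, E = EuclideanSpace ℝ (Fin n), e := EuclideanSpace.single 0 1, c > 0, z := c • e, and x := F_D(z) = Real.tanh (c/2) • e. Let f : E → ℝ be differentiable at x with gradient f x = E' • e for some real E'. Then the gradient of h := f ∘ F_D at z equals ((E' * (1 - Real.tanh (c/2)^2))/2) • e; in particular ‖gradient h z‖ = (|E'|/2) * (1 - Real.tanh (c/2)^2), so if tanh(c/2) = 1 - δ then ‖gradient h z‖ = (δ(2-δ)/2) * ‖gradient f x‖ ≥ (δ/2) * ‖gradient f x‖. -/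

import Mathlib

open RealInnerProductSpace

/-- The Euclidean parametrization of the Poincaré ball, `F_D(z) = (tanh(‖z‖/2)/‖z‖) • z`
(which equals `0` at `z = 0`). -/
noncomputable def FD {n : ℕ} (z : EuclideanSpace ℝ (Fin n)) : EuclideanSpace ℝ (Fin n) :=
  (Real.tanh (‖z‖ / 2) / ‖z‖) • z

lemma tanh_hasDerivAt (x : ℝ) : HasDerivAt Real.tanh (1 - Real.tanh x ^ 2) x := by
  have h := (Real.hasDerivAt_sinh x).div (Real.hasDerivAt_cosh x) (Real.cosh_pos x).ne'
  have heq : (Real.cosh x * Real.cosh x - Real.sinh x * Real.sinh x) / Real.cosh x ^ 2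
      = 1 - Real.tanh x ^ 2 := by
    rw [Real.tanh_eq_sinh_div_cosh]
    have h2 : Real.cosh x ≠ 0 := (Real.cosh_pos x).ne'
    have h3 := Real.cosh_sq_sub_sinh_sq x
    field_simp
  rw [heq] at h
  have hfun : (fun y => Real.sinh y / Real.cosh y) = Real.tanh := by
    funext y; rw [Real.tanh_eq_sinh_div_cosh]
  rwa [show (Real.sinh / Real.cosh) = Real.tanh from hfun] at h

lemma tanh_lt_one (x : ℝ) : Real.tanh x < 1 := by
  rw [Real.tanh_eq_sinh_div_cosh, div_lt_one (Real.cosh_pos x)]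
  nlinarith [Real.cosh_sub_sinh x, Real.exp_pos (-x)]

lemma tanh_pos {x : ℝ} (hx : 0 < x) : 0 < Real.tanh x := by
  rw [Real.tanh_eq_sinh_div_cosh]
  exact div_pos (by rwa [Real.sinh_pos_iff]) (Real.cosh_pos x)

set_option maxHeartbeats 2000000 in
theorem gradient_of_euclidean_parametrization (n : ℕ) (hn : 0 < n) (c : ℝ) (hc : 0 < c)
    (f : EuclideanSpace ℝ (Fin n) → ℝ) (E' : ℝ)
    (e : EuclideanSpace ℝ (Fin n)) (he : e = EuclideanSpace.single (⟨0, hn⟩ : Fin n) 1)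
    (z : EuclideanSpace ℝ (Fin n)) (hzdef : z = c • e)
    (hf : DifferentiableAt ℝ f (FD z))
    (hgrad : gradient f (FD z) = E' • e) :
    FD z = Real.tanh (c / 2) • e ∧
    gradient (f ∘ FD) z = ((E' * (1 - Real.tanh (c / 2) ^ 2)) / 2) • e ∧
    ‖gradient (f ∘ FD) z‖ = (|E'| / 2) * (1 - Real.tanh (c / 2) ^ 2) ∧
    ∀ δ : ℝ, Real.tanh (c / 2) = 1 - δ →
      ‖gradient (f ∘ FD) z‖ = (δ * (2 - δ) / 2) * ‖gradient f (FD z)‖ ∧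
      (δ / 2) * ‖gradient f (FD z)‖ ≤ ‖gradient (f ∘ FD) z‖ := by
  have hcne : c ≠ 0 := hc.ne'
  have hene : ‖e‖ = 1 := by rw [he, EuclideanSpace.norm_single]; norm_num
  have hznorm : ‖z‖ = c := by
    rw [hzdef, norm_smul, hene, mul_one, Real.norm_eq_abs, abs_of_pos hc]
  obtain ⟨t, ht⟩ : ∃ t, t = Real.tanh (c / 2) := ⟨_, rfl⟩
  rw [← ht]
  -- Part 1
  have h1 : FD z = t • e := by
    rw [FD, hznorm, hzdef, smul_smul, div_mul_cancel₀ _ hcne, ht]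
  set x := FD z with hx
  -- derivative of norm at z
  have hN : HasFDerivAt (fun w : EuclideanSpace ℝ (Fin n) => ‖w‖) (innerSL ℝ e) z := by
    have hsq : HasFDerivAt (fun w : EuclideanSpace ℝ (Fin n) => ‖w‖ ^ 2)
        (2 • (innerSL ℝ z)) z := by
      simpa using (hasFDerivAt_id z).norm_sq
    have hsqrt : HasDerivAt Real.sqrt (1 / (2 * Real.sqrt (‖z‖ ^ 2))) (‖z‖ ^ 2) := by
      apply Real.hasDerivAt_sqrt
      rw [hznorm]; positivity
    have hcomp := hsqrt.comp_hasFDerivAt z hsq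
    have hfun : (fun w : EuclideanSpace ℝ (Fin n) => Real.sqrt (‖w‖ ^ 2))
        = fun w => ‖w‖ := by
      funext w; rw [Real.sqrt_sq (norm_nonneg w)]
    simp only [Function.comp_def] at hcomp
    rw [hfun] at hcomp
    refine hcomp.congr_fderiv ?_
    rw [hznorm, Real.sqrt_sq hc.le]
    ext v
    simp [hzdef, real_inner_smul_left, smul_smul]
    field_simp
  -- derivative of scalar g(r) = tanh(r/2)/r at c
  set a : ℝ := (((1 - t ^ 2) / 2) * c - t) / c ^ 2 with ha
  have hg : HasDerivAt (fun r : ℝ => Real.tanh (r / 2) / r) a c := by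
    have h1' : HasDerivAt (fun r : ℝ => Real.tanh (r / 2)) ((1 - t ^ 2) / 2) c := by
      have := (tanh_hasDerivAt (c / 2)).comp c ((hasDerivAt_id c).div_const 2)
      simpa [ht, div_eq_mul_inv, mul_comm, Function.comp_def] using this
    have h2' : HasDerivAt (fun r : ℝ => r) 1 c := hasDerivAt_id c
    have := h1'.div h2' hcne
    simpa [ha, ht, mul_one, Pi.div_def] using this
  -- derivative of s(w) = tanh(‖w‖/2)/‖w‖ at z
  have hs : HasFDerivAt (fun w : EuclideanSpace ℝ (Fin n) => Real.tanh (‖w‖ / 2) / ‖w‖)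
      (a • innerSL ℝ e) z := by
    have hg' : HasDerivAt (fun r : ℝ => Real.tanh (r / 2) / r) a ‖z‖ := hznorm ▸ hg
    exact hg'.comp_hasFDerivAt z hN
  -- derivative of FD at z
  have hFD : HasFDerivAt FD
      ((Real.tanh (‖z‖ / 2) / ‖z‖) • ContinuousLinearMap.id ℝ _
        + (a • innerSL ℝ e).smulRight z) z := by
    have := hs.smul (hasFDerivAt_id z)
    exact this
  -- gradient of f at x
  have hfg : HasGradientAt f (E' • e) x := by
    have := hf.hasGradientAt
    rwa [hgrad] at this
  -- composition
  have hcomp := hfg.hasFDerivAt.comp z hFD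
  set g : EuclideanSpace ℝ (Fin n) := ((E' * (1 - t ^ 2)) / 2) • e with hgdef
  have hee : ⟪e, e⟫ = (1 : ℝ) := by
    rw [real_inner_self_eq_norm_sq, hene]; norm_num
  have hL : (InnerProductSpace.toDual ℝ (EuclideanSpace ℝ (Fin n))) g
      = ContinuousLinearMap.comp
          ((InnerProductSpace.toDual ℝ (EuclideanSpace ℝ (Fin n))) (E' • e))
          ((Real.tanh (‖z‖ / 2) / ‖z‖) • ContinuousLinearMap.id ℝ (EuclideanSpace ℝ (Fin n))
            + (a • innerSL ℝ e).smulRight z) := by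
    ext v
    simp only [ContinuousLinearMap.coe_comp', Function.comp_apply,
      ContinuousLinearMap.add_apply, ContinuousLinearMap.coe_smul',
      ContinuousLinearMap.smulRight_apply, ContinuousLinearMap.coe_id',
      Pi.smul_apply, id_eq, InnerProductSpace.toDual_apply_apply, innerSL_apply_apply]
    rw [hznorm, hgdef, hzdef, ← ht]
    rw [inner_add_right, real_inner_smul_right, real_inner_smul_left,
      real_inner_smul_right, real_inner_smul_right, real_inner_smul_left,
      real_inner_smul_left, hee]
    rw [ha]
    set p : ℝ := (inner ℝ e v : ℝ) with hp
    field_simp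
    ring_nf
    field_simp
    ring
  have h2 : HasGradientAt (f ∘ FD) g z := by
    rw [hasGradientAt_iff_hasFDerivAt]
    rw [← hL] at hcomp
    exact hcomp
  have h2' : gradient (f ∘ FD) z = ((E' * (1 - t ^ 2)) / 2) • e := h2.gradient
  have htlt : t < 1 := ht ▸ tanh_lt_one _
  have htpos : 0 < t := ht ▸ tanh_pos (by positivity)
  have ht2 : (0:ℝ) ≤ 1 - t ^ 2 := by nlinarith
  have h3 : ‖gradient (f ∘ FD) z‖ = (|E'| / 2) * (1 - t ^ 2) := by
    rw [h2', norm_smul, hene, mul_one, Real.norm_eq_abs, abs_div, abs_mul,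
      abs_of_nonneg ht2]
    norm_num
    ring
  refine ⟨h1, h2', h3, ?_⟩
  intro δ hδ
  have hgfnorm : ‖gradient f (FD z)‖ = |E'| := by
    rw [hgrad, norm_smul, hene, mul_one, Real.norm_eq_abs]
  have hδ1 : 1 - t ^ 2 = δ * (2 - δ) := by rw [show t = 1 - δ from hδ]; ring
  have hδpos : 0 < δ := by
    have : t = 1 - δ := hδ
    linarith
  constructor
  · rw [h3, hgfnorm, hδ1]; ring
  · rw [h3, hgfnorm, hδ1]
    have hδlt : δ < 1 := by
      have : t = 1 - δ := hδ
      linarith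
    nlinarith [mul_nonneg (mul_nonneg (abs_nonneg E') hδpos.le)
      (by linarith : (0:ℝ) ≤ 1 - δ)]
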